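/- For the Chaplygin ball with Suslov constraint and b = 0, on the invariant manifold N = {I₁₃ω₁ + I₂₃ω₂ = 0} the angular velocities ω₁ and ω₂ are constant along solutions: if a solution satisfies I₁₃ω₁(0) + I₂₃ω₂(0) = 0, then ω₁' = ω₂' = 0 for all time. -/

import Mathlib

open Set Real

private lemma solve2 (a b c x y r1 r2 : ℝ) (h1 : a * x + b * y = r1)
    (h2 : b * x + c * y = r2) :
    (a * c - b * b) * x = c * r1 - b * r2 ∧ (a * c - b * b) * y = a * r2 - b * r1 :=
  ⟨by linear_combination c * h1 - b * h2, by linear_combination a * h2 - b * h1⟩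

private lemma zero_of_deriv_mul_nonneg (f k : ℝ → ℝ)
    (hf : ∀ t, HasDerivAt f (k t * f t) t) (hk : Continuous k) (h0 : f 0 = 0) :
    ∀ t ≥ 0, f t = 0 := by
  intro t ht
  obtain ⟨C, hC⟩ := (isCompact_Icc (a := (0:ℝ)) (b := t)).exists_bound_of_continuousOn
    hk.continuousOn
  have hfc : Continuous f := by
    rw [continuous_iff_continuousAt]; exact fun s => (hf s).continuousAt
  have key := norm_le_gronwallBound_of_norm_deriv_right_le (f := f)
    (f' := fun s => k s * f s) (δ := 0) (K := C) (ε := 0) (a := 0) (b := t)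
    hfc.continuousOn
    (fun x _ => (hf x).hasDerivWithinAt)
    (by simp [h0])
    (fun x hx => by
      have := hC x (Ico_subset_Icc_self hx)
      simp only [norm_mul, add_zero]
      exact mul_le_mul_of_nonneg_right this (norm_nonneg _))
  have h := key t ⟨ht, le_refl t⟩
  rw [gronwallBound_ε0_δ0] at h
  exact norm_le_zero_iff.mp h

private lemma zero_of_deriv_mul (f k : ℝ → ℝ)
    (hf : ∀ t, HasDerivAt f (k t * f t) t) (hk : Continuous k) (h0 : f 0 = 0) :
    ∀ t, f t = 0 := by
  intro t
  rcases le_or_gt 0 t with ht | ht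
  · exact zero_of_deriv_mul_nonneg f k hf hk h0 t ht
  · have hg : ∀ s, HasDerivAt (fun s => f (-s)) ((fun s => -k (-s)) s * f (-s)) s := by
      intro s
      have h2 : HasDerivAt (fun s => f (-s)) (k (-s) * f (-s) * -1) s :=
        (hf (-s)).comp s (hasDerivAt_neg s)
      convert h2 using 1; ring
    have := zero_of_deriv_mul_nonneg (fun s => f (-s)) (fun s => -k (-s)) hg
      (by fun_prop) (by simpa using h0) (-t) (by linarith)
    simpa using this

/-- For the Chaplygin ball with Suslov constraint and `b = 0`, on the invariant
manifold `I₁₃ω₁ + I₂₃ω₂ = 0` the angular velocities are constant. -/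
theorem chaplygin_ball_suslov_invariant_manifold
    (I11 I22 I13 I23 D : ℝ) (hI11 : 0 < I11) (hI22 : 0 < I22) (hD : 0 < D)
    (hI : ¬(I13 = 0 ∧ I23 = 0))
    (ω1 ω2 γ1 γ2 γ3 dω1 dω2 : ℝ → ℝ)
    (hd1 : ∀ t, HasDerivAt ω1 (dω1 t) t)
    (hd2 : ∀ t, HasDerivAt ω2 (dω2 t) t)
    (heq1 : ∀ t, (I11 + D * (γ2 t ^ 2 + γ3 t ^ 2)) * dω1 t
        + (-(D * γ1 t * γ2 t)) * dω2 t
      = -(I13 * ω1 t + I23 * ω2 t) * ω2 t)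
    (heq2 : ∀ t, (-(D * γ1 t * γ2 t)) * dω1 t
        + (I22 + D * (γ1 t ^ 2 + γ3 t ^ 2)) * dω2 t
      = (I13 * ω1 t + I23 * ω2 t) * ω1 t)
    (hγ1 : ∀ t, HasDerivAt γ1 (-(γ3 t) * ω2 t) t)
    (hγ2 : ∀ t, HasDerivAt γ2 (γ3 t * ω1 t) t)
    (hγ3 : ∀ t, HasDerivAt γ3 (γ1 t * ω2 t - γ2 t * ω1 t) t)
    (h0 : I13 * ω1 0 + I23 * ω2 0 = 0) :
    ∀ t, dω1 t = 0 ∧ dω2 t = 0 := by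
  -- continuity of the coefficient functions
  have hγ1c : Continuous γ1 := by
    rw [continuous_iff_continuousAt]; exact fun s => (hγ1 s).continuousAt
  have hγ2c : Continuous γ2 := by
    rw [continuous_iff_continuousAt]; exact fun s => (hγ2 s).continuousAt
  have hγ3c : Continuous γ3 := by
    rw [continuous_iff_continuousAt]; exact fun s => (hγ3 s).continuousAt
  have hω1c : Continuous ω1 := by
    rw [continuous_iff_continuousAt]; exact fun s => (hd1 s).continuousAt
  have hω2c : Continuous ω2 := by
    rw [continuous_iff_continuousAt]; exact fun s => (hd2 s).continuousAt
  -- positivity of the determinant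
  have hΔ : ∀ t, 0 < (I11 + D * (γ2 t ^ 2 + γ3 t ^ 2)) * (I22 + D * (γ1 t ^ 2 + γ3 t ^ 2))
      - -(D * γ1 t * γ2 t) * -(D * γ1 t * γ2 t) := by
    intro t
    nlinarith [mul_pos hI11 hI22, sq_nonneg (D * γ2 t * γ3 t), sq_nonneg (D * γ1 t * γ3 t),
      sq_nonneg (D * γ3 t ^ 2),
      mul_nonneg (mul_nonneg hI11.le hD.le) (sq_nonneg (γ1 t)),
      mul_nonneg (mul_nonneg hI11.le hD.le) (sq_nonneg (γ3 t)),
      mul_nonneg (mul_nonneg hI22.le hD.le) (sq_nonneg (γ2 t)),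
      mul_nonneg (mul_nonneg hI22.le hD.le) (sq_nonneg (γ3 t))]
  -- solve the linear system
  have hsol : ∀ t,
      ((I11 + D * (γ2 t ^ 2 + γ3 t ^ 2)) * (I22 + D * (γ1 t ^ 2 + γ3 t ^ 2))
          - -(D * γ1 t * γ2 t) * -(D * γ1 t * γ2 t)) * dω1 t
        = (I22 + D * (γ1 t ^ 2 + γ3 t ^ 2)) * (-(I13 * ω1 t + I23 * ω2 t) * ω2 t)
          - -(D * γ1 t * γ2 t) * ((I13 * ω1 t + I23 * ω2 t) * ω1 t) ∧
      ((I11 + D * (γ2 t ^ 2 + γ3 t ^ 2)) * (I22 + D * (γ1 t ^ 2 + γ3 t ^ 2))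
          - -(D * γ1 t * γ2 t) * -(D * γ1 t * γ2 t)) * dω2 t
        = (I11 + D * (γ2 t ^ 2 + γ3 t ^ 2)) * ((I13 * ω1 t + I23 * ω2 t) * ω1 t)
          - -(D * γ1 t * γ2 t) * (-(I13 * ω1 t + I23 * ω2 t) * ω2 t) :=
    fun t => solve2 _ _ _ _ _ _ _ (heq1 t) (heq2 t)
  set f : ℝ → ℝ := fun t => I13 * ω1 t + I23 * ω2 t with hf_def
  set k : ℝ → ℝ := fun t =>
    (I13 * ((I22 + D * (γ1 t ^ 2 + γ3 t ^ 2)) * (-(ω2 t))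
        - -(D * γ1 t * γ2 t) * ω1 t)
      + I23 * ((I11 + D * (γ2 t ^ 2 + γ3 t ^ 2)) * ω1 t
        - -(D * γ1 t * γ2 t) * (-(ω2 t))))
    / ((I11 + D * (γ2 t ^ 2 + γ3 t ^ 2)) * (I22 + D * (γ1 t ^ 2 + γ3 t ^ 2))
        - -(D * γ1 t * γ2 t) * -(D * γ1 t * γ2 t)) with hk_def
  have hkc : Continuous k := by
    rw [hk_def]
    exact Continuous.div (by fun_prop) (by fun_prop) (fun t => (hΔ t).ne')
  have hfd : ∀ t, HasDerivAt f (k t * f t) t := by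
    intro t
    have hder : HasDerivAt f (I13 * dω1 t + I23 * dω2 t) t :=
      ((hd1 t).const_mul I13).add ((hd2 t).const_mul I23)
    convert hder using 1
    obtain ⟨hs1, hs2⟩ := hsol t
    simp only [hk_def, hf_def]
    rw [div_mul_eq_mul_div, eq_comm, eq_div_iff (hΔ t).ne']
    linear_combination I13 * hs1 + I23 * hs2
  have hfz : ∀ t, f t = 0 := zero_of_deriv_mul f k hfd hkc (by simpa [hf_def] using h0)
  intro t
  obtain ⟨hs1, hs2⟩ := hsol t
  have hf0 : I13 * ω1 t + I23 * ω2 t = 0 := by simpa [hf_def] using hfz t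
  rw [hf0] at hs1 hs2
  constructor
  · have hz : ((I11 + D * (γ2 t ^ 2 + γ3 t ^ 2)) * (I22 + D * (γ1 t ^ 2 + γ3 t ^ 2))
        - -(D * γ1 t * γ2 t) * -(D * γ1 t * γ2 t)) * dω1 t = 0 := by
      rw [hs1]; ring
    exact (mul_eq_zero.mp hz).resolve_left (hΔ t).ne'
  · have hz : ((I11 + D * (γ2 t ^ 2 + γ3 t ^ 2)) * (I22 + D * (γ1 t ^ 2 + γ3 t ^ 2))
        - -(D * γ1 t * γ2 t) * -(D * γ1 t * γ2 t)) * dω2 t = 0 := by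
      rw [hs2]; ring
    exact (mul_eq_zero.mp hz).resolve_left (hΔ t).ne'
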